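/- (Theorem 3, quantitative form) Let (A, B, u_O, u_L) be a finite two-player bimatrix game with Stackelberg value V. For every ε > 0 there exists δ > 0 such that for every horizon T ≥ 1 and all sequences a^1, …, a^T ∈ A and b^1, …, b^T ∈ B: if the swap regret max_{π : B → B} Σ_{t=1}^T (u_L(a^t, π(b^t)) − u_L(a^t, b^t)) is at most δ·T, then the optimizer's total utility satisfies Σ_{t=1}^T u_O(a^t, b^t) ≤ (V + ε)·T. -/

import Mathlib

open Finset

/-- A probability distribution (mixed strategy) on a finite type. -/
def IsDist {X : Type*} [Fintype X] (f : X → ℝ) : Prop :=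
  (∀ x, 0 ≤ f x) ∧ ∑ x, f x = 1

/-- The set of optimizer utilities `u_O(α, b)` over pairs where `b` is a best
response to `α`; the Stackelberg value is its greatest element. -/
def StackSet {A B : Type*} [Fintype A] [Fintype B] (uO uL : A → B → ℝ) : Set ℝ :=
  {v | ∃ (α : A → ℝ) (b : B), IsDist α ∧
    (∀ b' : B, ∑ a, α a * uL a b' ≤ ∑ a, α a * uL a b) ∧
    v = ∑ a, α a * uO a b}

lemma fiber_sum {I A : Type*} [Fintype A] [DecidableEq A] (s : Finset I) (g : I → A) (f : A → ℝ) :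
    ∑ x : A, (((s.filter (fun t => g t = x)).card : ℝ) * f x) = ∑ t ∈ s, f (g t) := by
  rw [← Finset.sum_fiberwise s g (fun t => f (g t))]
  apply Finset.sum_congr rfl
  intro x _
  rw [Finset.sum_congr rfl (fun t ht => by rw [(Finset.mem_filter.mp ht).2]),
    Finset.sum_const, nsmul_eq_mul]


lemma cont_pay {A : Type*} [Fintype A] (k : A → ℝ) :
    Continuous (fun α : A → ℝ => ∑ a, α a * k a) :=
  continuous_finset_sum _ fun a _ => (continuous_apply a).mul continuous_const

lemma approx_best {A B : Type*} [Fintype A] [Fintype B] [Nonempty A] [Nonempty B]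
    (uO uL : A → B → ℝ) (V : ℝ) (hV : IsGreatest (StackSet uO uL) V) {ε : ℝ} (hε : 0 < ε) :
    ∃ δ : ℝ, 0 < δ ∧ ∀ (α : A → ℝ) (b : B), IsDist α →
      (∀ b', ∑ a, α a * uL a b' ≤ ∑ a, α a * uL a b + δ) →
      ∑ a, α a * uO a b ≤ V + ε := by
  classical
  set K : B → Set (A → ℝ) := fun b => {α | IsDist α ∧ V + ε ≤ ∑ a, α a * uO a b} with hK
  set f : B → (A → ℝ) → ℝ :=
    fun b α => ∑ b', max 0 (∑ a, α a * uL a b' - ∑ a, α a * uL a b) with hf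
  have hfcont : ∀ b, Continuous (f b) := by
    intro b
    exact continuous_finset_sum _ fun b' _ =>
      continuous_const.max ((cont_pay (fun a => uL a b')).sub (cont_pay (fun a => uL a b)))
  have hfnn : ∀ b α, 0 ≤ f b α := fun b α =>
    Finset.sum_nonneg fun b' _ => le_max_left _ _
  have hKcompact : ∀ b, IsCompact (K b) := by
    intro b
    apply Metric.isCompact_of_isClosed_isBounded
    · have h1 : IsClosed {α : A → ℝ | ∀ a, 0 ≤ α a} := by
        have : {α : A → ℝ | ∀ a, 0 ≤ α a} = ⋂ a, {α | 0 ≤ α a} := by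
          ext; simp [Set.mem_iInter]
        rw [this]
        exact isClosed_iInter fun a => isClosed_le continuous_const (continuous_apply a)
      have h2 : IsClosed {α : A → ℝ | ∑ x, α x = 1} :=
        isClosed_eq (cont_pay (fun _ => 1) |>.congr (by intro α; simp)) continuous_const
      have h3 : IsClosed {α : A → ℝ | V + ε ≤ ∑ a, α a * uO a b} :=
        isClosed_le continuous_const (cont_pay _)
      have : K b = ({α : A → ℝ | ∀ a, 0 ≤ α a} ∩ {α | ∑ x, α x = 1}) ∩
          {α | V + ε ≤ ∑ a, α a * uO a b} := by
        ext α; simp [hK, IsDist, and_assoc]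
      rw [this]
      exact ((h1.inter h2).inter h3)
    · apply Bornology.IsBounded.subset (Metric.isBounded_closedBall (x := (0 : A → ℝ)) (r := 1))
      intro α hα
      rcases hα with ⟨⟨hnn, hsum⟩, _⟩
      rw [Metric.mem_closedBall, dist_zero_right]
      rw [pi_norm_le_iff_of_nonneg zero_le_one]
      intro a
      rw [Real.norm_eq_abs, abs_le]
      constructor
      · linarith [hnn a]
      · calc α a ≤ ∑ x, α x := Finset.single_le_sum (fun x _ => hnn x) (mem_univ a)
          _ = 1 := hsum
  -- positive lower bound for f b on K b
  have hc : ∀ b : B, ∃ c : ℝ, 0 < c ∧ ∀ α ∈ K b, c ≤ f b α := by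
    intro b
    rcases Set.eq_empty_or_nonempty (K b) with he | hne
    · exact ⟨1, one_pos, by rw [he]; simp⟩
    · obtain ⟨α0, hα0, hmin⟩ := (hKcompact b).exists_isMinOn hne (hfcont b).continuousOn
      refine ⟨f b α0, ?_, fun α hα => hmin hα⟩
      rcases lt_or_eq_of_le (hfnn b α0) with h | h
      · exact h
      · exfalso
        -- f b α0 = 0 forces b to be a best response to α0
        have hall : ∀ b', ∑ a, α0 a * uL a b' ≤ ∑ a, α0 a * uL a b := by
          intro b'
          have hz : max 0 (∑ a, α0 a * uL a b' - ∑ a, α0 a * uL a b) = 0 := by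
            have := (Finset.sum_eq_zero_iff_of_nonneg
              (fun b'' _ => le_max_left 0 _)).mp h.symm b' (mem_univ b')
            exact this
          have := le_max_right 0 (∑ a, α0 a * uL a b' - ∑ a, α0 a * uL a b)
          linarith [hz ▸ this]
        have hmem : (∑ a, α0 a * uO a b) ∈ StackSet uO uL :=
          ⟨α0, b, hα0.1, hall, rfl⟩
        have := hV.2 hmem
        have := hα0.2
        linarith
  choose c hcpos hcle using hc
  have hBne : (univ : Finset B).Nonempty := univ_nonempty
  set cmin : ℝ := univ.inf' hBne c with hcmin
  have hcminpos : 0 < cmin := by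
    rw [hcmin, Finset.lt_inf'_iff]
    exact fun b _ => hcpos b
  refine ⟨cmin / (Fintype.card B + 1), by positivity, ?_⟩
  intro α b hα hcond
  by_contra hlt
  push_neg at hlt
  have hmem : α ∈ K b := ⟨hα, le_of_lt hlt⟩
  have h1 : c b ≤ f b α := hcle b α hmem
  have h2 : f b α ≤ Fintype.card B * (cmin / (Fintype.card B + 1)) := by
    rw [hf]
    calc ∑ b', max 0 (∑ a, α a * uL a b' - ∑ a, α a * uL a b)
        ≤ ∑ _b' : B, cmin / (Fintype.card B + 1) := by
          apply Finset.sum_le_sum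
          intro b' _
          apply max_le (by positivity)
          linarith [hcond b']
      _ = Fintype.card B * (cmin / (Fintype.card B + 1)) := by
          rw [Finset.sum_const, Finset.card_univ, nsmul_eq_mul]
  have h3 : (Fintype.card B : ℝ) * (cmin / (Fintype.card B + 1)) < cmin := by
    have hcard : (0:ℝ) < (Fintype.card B : ℝ) + 1 := by positivity
    rw [mul_comm, div_mul_eq_mul_div, div_lt_iff₀ hcard]
    nlinarith [hcminpos]
  have h4 : cmin ≤ c b := Finset.inf'_le c (mem_univ b)
  linarith

/-- Theorem 3 (quantitative form): for every `ε > 0` there is `δ > 0` such that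
whenever the learner's swap regret is at most `δ·T`, the optimizer's total
utility is at most `(V + ε)·T`, where `V` is the Stackelberg value. -/
theorem stmt6 {A B : Type*} [Fintype A] [Fintype B] [Nonempty A] [Nonempty B]
    (uO uL : A → B → ℝ)
    (V : ℝ) (hV : IsGreatest (StackSet uO uL) V) :
    ∀ ε : ℝ, 0 < ε → ∃ δ : ℝ, 0 < δ ∧
      ∀ (T : ℕ), 1 ≤ T → ∀ (a : Fin T → A) (b : Fin T → B),
        (∀ π : B → B, ∑ t : Fin T, (uL (a t) (π (b t)) - uL (a t) (b t)) ≤ δ * T) →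
        ∑ t : Fin T, uO (a t) (b t) ≤ (V + ε) * T := by
  classical
  intro ε hε
  obtain ⟨δ', hδ'pos, hδ'⟩ := approx_best uO uL V hV (half_pos hε)
  set M : ℝ := univ.sup' univ_nonempty (fun p : A × B => uO p.1 p.2) with hMdef
  have hM : ∀ x y, uO x y ≤ M := fun x y =>
    Finset.le_sup' (fun p : A × B => uO p.1 p.2) (mem_univ (x, y))
  set n : ℕ := Fintype.card B with hndef
  have hnpos : 0 < n := Fintype.card_pos
  clear_value M
  set D : ℝ := |M| + |V| + ε + 1 with hDdef
  have hDpos : 0 < D := by rw [hDdef]; positivity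
  set η : ℝ := ε / (2 * n * D) with hηdef
  have hηpos : 0 < η := by
    rw [hηdef]
    apply div_pos hε
    rw [hDdef]
    positivity
  clear_value D
  clear_value η
  refine ⟨δ' * η, mul_pos hδ'pos hηpos, ?_⟩
  intro T hT a b hswap
  have hTpos : (0:ℝ) < T := by exact_mod_cast hT
  set S : B → Finset (Fin T) := fun y => univ.filter (fun t => b t = y) with hSdef
  set N : B → ℝ := fun y => ((S y).card : ℝ) with hNdef
  have hNnn : ∀ y, 0 ≤ N y := fun y => Nat.cast_nonneg _
  -- swap regret instantiation per target y and deviation b'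
  have hreg : ∀ y b', ∑ t ∈ S y, uL (a t) b' ≤ ∑ t ∈ S y, uL (a t) y + δ' * η * T := by
    intro y b'
    have h := hswap (fun x => if x = y then b' else x)
    rw [← Finset.sum_filter_add_sum_filter_not univ (fun t => b t = y)] at h
    have h1 : ∑ t ∈ univ.filter (fun t => b t = y),
        (uL (a t) ((fun x => if x = y then b' else x) (b t)) - uL (a t) (b t)) =
        ∑ t ∈ S y, (uL (a t) b' - uL (a t) y) := by
      apply Finset.sum_congr rfl
      intro t ht
      have hbt : b t = y := (Finset.mem_filter.mp ht).2
      simp [hbt]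
    have h2 : ∑ t ∈ univ.filter (fun t => ¬ b t = y),
        (uL (a t) ((fun x => if x = y then b' else x) (b t)) - uL (a t) (b t)) = 0 := by
      apply Finset.sum_eq_zero
      intro t ht
      have hbt : ¬ b t = y := (Finset.mem_filter.mp ht).2
      simp [hbt]
    rw [h1, h2, add_zero, Finset.sum_sub_distrib] at h
    linarith
  -- total decomposition
  have htot : ∑ t : Fin T, uO (a t) (b t) = ∑ y : B, ∑ t ∈ S y, uO (a t) y := by
    rw [← Finset.sum_fiberwise univ b (fun t => uO (a t) (b t))]
    apply Finset.sum_congr rfl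
    intro y _
    apply Finset.sum_congr rfl
    intro t ht
    rw [(Finset.mem_filter.mp ht).2]
  -- per-y bounds
  have hbound1 : ∀ y, ∑ t ∈ S y, uO (a t) y ≤ N y * M := by
    intro y
    calc ∑ t ∈ S y, uO (a t) y ≤ ∑ _t ∈ S y, M :=
          Finset.sum_le_sum fun t _ => hM _ _
      _ = N y * M := by rw [Finset.sum_const, nsmul_eq_mul]
  have hbound2 : ∀ y, η * T ≤ N y → ∑ t ∈ S y, uO (a t) y ≤ (V + ε / 2) * N y := by
    intro y hy
    have hNpos : 0 < N y := lt_of_lt_of_le (by positivity) hy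
    set α : A → ℝ := fun x => ((S y).filter (fun t => a t = x)).card / N y with hαdef
    have hpay : ∀ k : A → ℝ, ∑ x, α x * k x = (∑ t ∈ S y, k (a t)) / N y := by
      intro k
      rw [← fiber_sum (S y) a k, Finset.sum_div]
      apply Finset.sum_congr rfl
      intro x _
      rw [hαdef]
      ring
    have hdist : IsDist α := by
      constructor
      · intro x; rw [hαdef]; positivity
      · have h1 := hpay (fun _ => 1)
        simp only [mul_one] at h1
        rw [h1, Finset.sum_const, nsmul_eq_mul, mul_one, div_self (ne_of_gt hNpos)]
    have hcond : ∀ b', ∑ x, α x * uL x b' ≤ ∑ x, α x * uL x y + δ' := by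
      intro b'
      rw [hpay (fun x => uL x b'), hpay (fun x => uL x y)]
      rw [div_add' _ _ _ (ne_of_gt hNpos), div_le_div_iff_of_pos_right hNpos]
      have h1 := hreg y b'
      have h2 : δ' * η * T ≤ δ' * N y := by
        rw [mul_assoc]
        exact mul_le_mul_of_nonneg_left hy (le_of_lt hδ'pos)
      linarith
    have := hδ' α y hdist hcond
    rw [hpay (fun x => uO x y), div_le_iff₀ hNpos] at this
    exact this
  -- split into big and small
  -- uniform per-y bound
  have hNsum : ∑ y : B, N y = T := by
    have h := Finset.card_eq_sum_card_fiberwise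
      (s := (univ : Finset (Fin T))) (t := (univ : Finset B)) (f := b)
      (fun t _ => mem_univ (b t))
    have h2 : ∑ y : B, (S y).card = T := by
      rw [hSdef, ← h, Finset.card_univ, Fintype.card_fin]
    rw [hNdef]
    beta_reduce
    exact_mod_cast h2
  have hMD : M - V - ε / 2 ≤ D := by
    have := le_abs_self M
    have := neg_abs_le V
    rw [hDdef]
    linarith
  set R : ℝ := max (M - V - ε / 2) 0 with hRdef
  have hRnn : 0 ≤ R := le_max_right _ _
  have hRD : R ≤ D := max_le hMD (le_of_lt hDpos)
  clear_value R
  have hbound : ∀ y, ∑ t ∈ S y, uO (a t) y ≤ (V + ε / 2) * N y + η * T * R := by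
    intro y
    have hηTR : 0 ≤ η * T * R := mul_nonneg (mul_nonneg hηpos.le hTpos.le) hRnn
    rcases le_or_gt (η * T) (N y) with h | h
    · have := hbound2 y h
      linarith
    · have h1 := hbound1 y
      have h2 : N y * (M - V - ε / 2) ≤ η * T * R := by
        rcases le_or_gt (M - V - ε / 2) 0 with hm | hm
        · have hnp : N y * (M - V - ε / 2) ≤ 0 := mul_nonpos_of_nonneg_of_nonpos (hNnn y) hm
          linarith
        · have hRe : R = M - V - ε / 2 := by rw [hRdef]; exact max_eq_left (le_of_lt hm)
          rw [hRe]
          exact mul_le_mul_of_nonneg_right (le_of_lt h) (le_of_lt hm)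
      have hid : N y * M = (V + ε / 2) * N y + N y * (M - V - ε / 2) := by ring
      linarith
  have hfin : (n : ℝ) * (η * ↑T * R) ≤ ε / 2 * T := by
    have hnnn : (0:ℝ) ≤ (n : ℝ) := Nat.cast_nonneg n
    have hstep : (n : ℝ) * (η * ↑T * R) ≤ (n : ℝ) * (η * ↑T * D) := by
      apply mul_le_mul_of_nonneg_left _ hnnn
      exact mul_le_mul_of_nonneg_left hRD (mul_nonneg hηpos.le hTpos.le)
    have heq : (n : ℝ) * (η * ↑T * D) = ε / 2 * T := by
      rw [hηdef]
      have hn0 : (n : ℝ) ≠ 0 := ne_of_gt (by exact_mod_cast hnpos)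
      have hD0 : D ≠ 0 := ne_of_gt hDpos
      field_simp
    linarith
  calc ∑ t : Fin T, uO (a t) (b t) = ∑ y : B, ∑ t ∈ S y, uO (a t) y := htot
    _ ≤ ∑ y : B, ((V + ε / 2) * N y + η * ↑T * R) := Finset.sum_le_sum fun y _ => hbound y
    _ = (V + ε / 2) * ↑T + (n : ℝ) * (η * ↑T * R) := by
        rw [Finset.sum_add_distrib, ← Finset.mul_sum, hNsum, Finset.sum_const,
          Finset.card_univ, nsmul_eq_mul, hndef]
    _ ≤ (V + ε / 2) * ↑T + ε / 2 * ↑T := by linarith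
    _ = (V + ε) * ↑T := by ring
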